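/- Let D be a density matrix on ℂ^m ⊗ ℂ^n, i.e. a positive semidefinite matrix of trace 1 indexed by (Fin m × Fin n), and let D₁ ∈ M_m(ℂ) and D₂ ∈ M_n(ℂ) be its partial traces, characterized by tr(D₁ a) = tr(D (a ⊗ 1_n)) for all a ∈ M_m(ℂ) and tr(D₂ b) = tr(D (1_m ⊗ b)) for all b ∈ M_n(ℂ), where ⊗ denotes the Kronecker product. Let q₁ ∈ M_m(ℂ) and q₂ ∈ M_n(ℂ) be orthogonal projections with tr(D₁ q₁) = 1 − ε₁ and tr(D₂ q₂) = 1 − ε₂ (note ε₂ ≥ 0 automatically). Then tr(D (q₁ ⊗ q₂)) ≥ 1 − ε₁ − √ε₂. -/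

import Mathlib

open scoped ComplexOrder
open Kronecker

namespace GentleAux
open Matrix
open scoped MatrixOrder

lemma conjT_kron {a b : Type*} (C : Matrix a a ℂ) (E : Matrix b b ℂ) :
    (C ⊗ₖ E)ᴴ = Cᴴ ⊗ₖ Eᴴ := by
  ext x y
  obtain ⟨i, j⟩ := x
  obtain ⟨k, l⟩ := y
  simp [Matrix.conjTranspose_apply]

lemma psd_kron {a b : Type*} [Fintype a] [Fintype b] [DecidableEq a] [DecidableEq b]
    {A : Matrix a a ℂ} {B : Matrix b b ℂ} (hA : A.PosSemidef) (hB : B.PosSemidef) :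
    (A ⊗ₖ B).PosSemidef := by
  obtain ⟨C, hC⟩ : ∃ C : Matrix a a ℂ, A = Cᴴ * C := ⟨CFC.sqrt A, by
    rw [(CFC.sqrt_nonneg A).posSemidef.1.eq, CFC.sqrt_mul_sqrt_self A hA.nonneg]⟩
  obtain ⟨E, hE⟩ : ∃ E : Matrix b b ℂ, B = Eᴴ * E := ⟨CFC.sqrt B, by
    rw [(CFC.sqrt_nonneg B).posSemidef.1.eq, CFC.sqrt_mul_sqrt_self B hB.nonneg]⟩
  have h : A ⊗ₖ B = (C ⊗ₖ E)ᴴ * (C ⊗ₖ E) := by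
    rw [conjT_kron, ← Matrix.mul_kronecker_mul, ← hC, ← hE]
  rw [h]
  exact Matrix.posSemidef_conjTranspose_mul_self _

lemma psd_trace_nonneg {k : Type*} [Fintype k] [DecidableEq k] {A : Matrix k k ℂ}
    (hA : A.PosSemidef) : 0 ≤ A.trace := by
  rw [Matrix.trace]
  apply Finset.sum_nonneg
  intro i _
  have := hA.diag_nonneg (i := i)
  simpa [dotProduct, Matrix.mulVec, Pi.single_apply, Matrix.diag] using this

lemma psd_trace_mul_nonneg {k : Type*} [Fintype k] [DecidableEq k] {A B : Matrix k k ℂ}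
    (hA : A.PosSemidef) (hB : B.PosSemidef) : 0 ≤ (A * B).trace := by
  have hs := CFC.sqrt_mul_sqrt_self A hA.nonneg
  have h : (A * B).trace = (CFC.sqrt A * B * CFC.sqrt A).trace := by
    rw [Matrix.trace_mul_cycle, hs]
  rw [h]
  have : (CFC.sqrt A * B * CFC.sqrt A).PosSemidef := by
    have := hB.conjTranspose_mul_mul_same (CFC.sqrt A)
    rwa [(CFC.sqrt_nonneg A).posSemidef.1.eq] at this
  exact psd_trace_nonneg this

lemma proj_psd {k : Type*} [Fintype k] [DecidableEq k] {q : Matrix k k ℂ}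
    (hherm : q.IsHermitian) (hidem : q * q = q) : q.PosSemidef := by
  have : q = qᴴ * q := by rw [hherm.eq, hidem]
  rw [this]
  exact Matrix.posSemidef_conjTranspose_mul_self _

lemma compl_proj_psd {k : Type*} [Fintype k] [DecidableEq k] {q : Matrix k k ℂ}
    (hherm : q.IsHermitian) (hidem : q * q = q) : (1 - q).PosSemidef := by
  apply proj_psd
  · exact (Matrix.isHermitian_one).sub hherm
  · simp [Matrix.sub_mul, Matrix.mul_sub, hidem]

end GentleAux

open GentleAux


/-- Lemma "gentle-pinching" part 2: for a density matrix `D` on `ℂ^m ⊗ ℂ^n` with partial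
traces `D₁`, `D₂`, and orthogonal projections `q₁`, `q₂` with `tr (D₁ q₁) = 1 - ε₁` and
`tr (D₂ q₂) = 1 - ε₂`, one has `tr (D (q₁ ⊗ q₂)) ≥ 1 - ε₁ - √ε₂`. -/
theorem trace_partial_trace_bound {m n : ℕ}
    (D : Matrix (Fin m × Fin n) (Fin m × Fin n) ℂ)
    (hD : D.PosSemidef) (hDtr : D.trace = 1)
    (D₁ : Matrix (Fin m) (Fin m) ℂ) (D₂ : Matrix (Fin n) (Fin n) ℂ)
    (hD₁ : ∀ a : Matrix (Fin m) (Fin m) ℂ,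
      (D₁ * a).trace = (D * (a ⊗ₖ (1 : Matrix (Fin n) (Fin n) ℂ))).trace)
    (hD₂ : ∀ b : Matrix (Fin n) (Fin n) ℂ,
      (D₂ * b).trace = (D * ((1 : Matrix (Fin m) (Fin m) ℂ) ⊗ₖ b)).trace)
    (q₁ : Matrix (Fin m) (Fin m) ℂ) (q₂ : Matrix (Fin n) (Fin n) ℂ)
    (hq₁herm : q₁.IsHermitian) (hq₁idem : q₁ * q₁ = q₁)
    (hq₂herm : q₂.IsHermitian) (hq₂idem : q₂ * q₂ = q₂)
    (ε₁ ε₂ : ℝ)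
    (h1 : (D₁ * q₁).trace = ((1 - ε₁ : ℝ) : ℂ))
    (h2 : (D₂ * q₂).trace = ((1 - ε₂ : ℝ) : ℂ)) :
    1 - ε₁ - Real.sqrt ε₂ ≤ (D * (q₁ ⊗ₖ q₂)).trace.re := by
  have hq₁c := compl_proj_psd hq₁herm hq₁idem
  have hq₂c := compl_proj_psd hq₂herm hq₂idem
  -- trace D₂ = 1
  have hD₂tr : D₂.trace = 1 := by
    have := hD₂ 1
    rwa [mul_one, Matrix.one_kronecker_one, mul_one, hDtr] at this
  -- t := tr(D (q₁ ⊗ (1-q₂)))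
  set t : ℂ := (D * (q₁ ⊗ₖ ((1 : Matrix (Fin n) (Fin n) ℂ) - q₂))).trace with ht
  -- 0 ≤ t
  have ht0 : 0 ≤ t :=
    psd_trace_mul_nonneg hD (psd_kron (proj_psd hq₁herm hq₁idem) hq₂c)
  -- splitting: 1 ⊗ (1-q₂) = q₁ ⊗ (1-q₂) + (1-q₁) ⊗ (1-q₂)
  have hsplit : ((1 : Matrix (Fin m) (Fin m) ℂ) ⊗ₖ ((1 : Matrix (Fin n) (Fin n) ℂ) - q₂))
      = q₁ ⊗ₖ ((1 : Matrix (Fin n) (Fin n) ℂ) - q₂)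
        + ((1 : Matrix (Fin m) (Fin m) ℂ) - q₁) ⊗ₖ ((1 : Matrix (Fin n) (Fin n) ℂ) - q₂) := by
    ext x y
    obtain ⟨i, j⟩ := x
    obtain ⟨k, l⟩ := y
    simp [Matrix.kroneckerMap_apply, Matrix.sub_apply, Matrix.add_apply]
    ring
  -- tr(D (1 ⊗ (1-q₂))) = ε₂
  have hε₂ : (D * ((1 : Matrix (Fin m) (Fin m) ℂ) ⊗ₖ ((1 : Matrix (Fin n) (Fin n) ℂ) - q₂))).trace
      = (ε₂ : ℂ) := by
    have hk : ((1 : Matrix (Fin m) (Fin m) ℂ) ⊗ₖ ((1 : Matrix (Fin n) (Fin n) ℂ) - q₂))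
        = (1 : Matrix (Fin m × Fin n) (Fin m × Fin n) ℂ)
          - ((1 : Matrix (Fin m) (Fin m) ℂ) ⊗ₖ q₂) := by
      ext x y
      obtain ⟨i, j⟩ := x
      obtain ⟨k, l⟩ := y
      simp [Matrix.kroneckerMap_apply, Matrix.sub_apply, Matrix.one_apply, Prod.ext_iff]
      by_cases h : i = k <;> simp [h]
    have := hD₂ ((1 : Matrix (Fin n) (Fin n) ℂ) - q₂)
    rw [Matrix.mul_sub, mul_one, Matrix.trace_sub, hD₂tr, h2] at this
    rw [hk, Matrix.mul_sub, mul_one, Matrix.trace_sub, hDtr, ← hD₂ q₂, h2] at this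
    rw [hk, Matrix.mul_sub, mul_one, Matrix.trace_sub, hDtr, ← hD₂ q₂, h2]
    push_cast
    ring
  -- t ≤ ε₂
  have htle : t ≤ (ε₂ : ℂ) := by
    have h0 : 0 ≤ (D * (((1 : Matrix (Fin m) (Fin m) ℂ) - q₁)
        ⊗ₖ ((1 : Matrix (Fin n) (Fin n) ℂ) - q₂))).trace :=
      psd_trace_mul_nonneg hD (psd_kron hq₁c hq₂c)
    have : (ε₂ : ℂ) = t + (D * (((1 : Matrix (Fin m) (Fin m) ℂ) - q₁)
        ⊗ₖ ((1 : Matrix (Fin n) (Fin n) ℂ) - q₂))).trace := by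
      rw [← hε₂, hsplit, Matrix.mul_add, Matrix.trace_add, ht]
    rw [this]
    exact le_add_of_nonneg_right h0
  -- tr(D (q₁⊗q₂)) = (1-ε₁) - t
  have hmain : (D * (q₁ ⊗ₖ q₂)).trace = ((1 - ε₁ : ℝ) : ℂ) - t := by
    have hk : q₁ ⊗ₖ q₂ = q₁ ⊗ₖ (1 : Matrix (Fin n) (Fin n) ℂ)
        - q₁ ⊗ₖ ((1 : Matrix (Fin n) (Fin n) ℂ) - q₂) := by
      ext x y
      obtain ⟨i, j⟩ := x
      obtain ⟨k, l⟩ := y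
      simp [Matrix.kroneckerMap_apply, Matrix.sub_apply]
      ring
    rw [hk, Matrix.mul_sub, Matrix.trace_sub, ← hD₁ q₁, h1, ht]
  -- 0 ≤ ε₂
  have hε₂0 : 0 ≤ ε₂ := by
    have := ht0.trans htle
    exact_mod_cast (Complex.zero_le_real).mp this
  -- ε₂ ≤ 1
  have hε₂1 : ε₂ ≤ 1 := by
    have h0 : 0 ≤ (D₂ * q₂).trace := by
      rw [hD₂ q₂]
      exact psd_trace_mul_nonneg hD (psd_kron (proj_psd Matrix.isHermitian_one
        (by simp)) (proj_psd hq₂herm hq₂idem))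
    rw [h2] at h0
    have := (Complex.zero_le_real).mp h0
    linarith
  -- t.re ≤ ε₂
  have htre : t.re ≤ ε₂ := by
    rw [Complex.le_def] at htle
    simpa using htle.1
  have hsq : ε₂ ≤ Real.sqrt ε₂ := by
    nlinarith [Real.sq_sqrt hε₂0, Real.sqrt_nonneg ε₂]
  rw [hmain]
  simp only [Complex.sub_re, Complex.ofReal_re]
  linarith
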